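/- Let π be the 7-partition of size 9 defined by π(1,1,1,1,1,1,1) = 2, π(i₁,…,i₇) = 1 whenever exactly one of the indices equals 2 and all others equal 1, and π(i₁,…,i₇) = 0 otherwise (this is the 7-partition whose character is Z_π = 1 + t₁ + t₂ + t₃ + t₄ + t₅ + t₆ + t₇ + t₈). Then ω^c_π = 64 = 1 + 7 + C(7,2) + C(7,3), where C(a,b) is the binomial coefficient. -/

import Mathlib

/-!
STATEMENT 17: Let π be the 7-partition with π(1,…,1) = 2, π(i₁,…,i₇) = 1 when
exactly one index equals 2 and the others equal 1, and π = 0 otherwise (character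
Z_π = 1 + t₁ + ⋯ + t₈; it has size 9).  Then ω^c_π = 64 = 1 + 7 + C(7,2) + C(7,3).

Modelling: partitions are 0-indexed weakly decreasing finitely supported functions
ℕⁿ → ℕ, so this π takes value 2 at 0, value 1 at the points Pi.single a 1, and 0
elsewhere.  The (finite) sums and products defining ω^c_π are `finsum`/`finprod`.
-/

/-- An `n`-partition: a function π : ℕⁿ → ℕ (0-indexed version of (ℤ_{≥1})ⁿ → ℕ),
weakly decreasing in each coordinate and with finite support. -/
structure NPartition (n : ℕ) where
  toFun : (Fin n → ℕ) → ℕ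
  antitone : ∀ ⦃i j : Fin n → ℕ⦄, (∀ a, i a ≤ j a) → toFun j ≤ toFun i
  finite : (Function.support toFun).Finite

/-- The size |π| = Σ_i π(i). -/
noncomputable def NPartition.size {n : ℕ} (π : NPartition n) : ℕ := ∑ᶠ i, π.toFun i

/-- The binary representation of an (n−1)-partition ξ, as a function ℕⁿ → ℕ:
value 1 at j iff j_n < ξ(j₁,…,j_{n−1}) (0-indexed), and 0 otherwise. -/
def binFun (n : ℕ) (hn : 1 ≤ n) (ξ : NPartition (n - 1)) : (Fin n → ℕ) → ℕ :=
  fun j => if j ⟨n - 1, by omega⟩ < ξ.toFun (fun a => j (Fin.castLE (Nat.sub_le n 1) a))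
    then 1 else 0

/-- The set 𝒞_π of finitely supported ℕ-valued functions m on the nonempty
(n−1)-partitions such that π = Σ_ξ m_ξ · (binary representation of ξ). -/
def Cset (n : ℕ) (hn : 1 ≤ n) (π : NPartition n) :
    Set ({ξ : NPartition (n - 1) // ξ.toFun ≠ 0} → ℕ) :=
  {m | (Function.support m).Finite ∧
    ∀ j : Fin n → ℕ, π.toFun j = ∑ᶠ ξ, m ξ * binFun n hn ξ.1 j}

/-- The combinatorial weight ω^c_π = Σ_{m ∈ 𝒞_π} Π_ξ 1/(m_ξ)!. -/
noncomputable def omegaC (n : ℕ) (hn : 1 ≤ n) (π : NPartition n) : ℚ :=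
  ∑ᶠ m ∈ Cset n hn π, ∏ᶠ ξ, (1 / (Nat.factorial (m ξ)) : ℚ)

/-- The 7-partition with value 2 at the origin, 1 at the standard basis points,
and 0 elsewhere (0-indexed). -/
noncomputable def f17 : (Fin 7 → ℕ) → ℕ := fun j =>
  if j = 0 then 2 else if ∃ a : Fin 7, j = Pi.single a 1 then 1 else 0

section helpers
open Classical

theorem NPartition.ext' {n} {p q : NPartition n} (h : p.toFun = q.toFun) : p = q := by
  cases p; cases q; cases h; rfl

theorem single_ne_zero' {k : ℕ} (a : Fin k) : Pi.single a (1:ℕ) ≠ (0 : Fin k → ℕ) := by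
  intro h
  have := congrFun h a
  simp at this

theorem single_inj {k : ℕ} {a b : Fin k} (h : (Pi.single a 1 : Fin k → ℕ) = Pi.single b 1) : a = b := by
  have := congrFun h a
  simp [Pi.single_apply] at this
  by_contra hab
  exact hab this

theorem le_single {k : ℕ} {a : Fin k} {i : Fin k → ℕ} (h : ∀ b, i b ≤ (Pi.single a 1 : Fin k → ℕ) b) :
    i = 0 ∨ i = (Pi.single a 1 : Fin k → ℕ) := by
  by_cases ha : i a = 0
  · left; funext b
    by_cases hb : b = a
    · simpa [hb] using ha
    · have := h b
      simp [Pi.single_apply, hb] at this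
      simpa using this
  · right; funext b
    by_cases hb : b = a
    · subst hb
      have := h b
      simp [Pi.single_apply] at this ⊢
      omega
    · have := h b
      simp [Pi.single_apply, hb] at this ⊢
      omega

noncomputable def xiFun (c : ℕ) (S : Finset (Fin 6)) : (Fin 6 → ℕ) → ℕ :=
  fun i => if i = 0 then c else if ∃ a ∈ S, i = Pi.single a 1 then 1 else 0

theorem xiFun_zero (c : ℕ) (S : Finset (Fin 6)) : xiFun c S 0 = c := by simp [xiFun]

theorem xiFun_single (c : ℕ) (S : Finset (Fin 6)) (a : Fin 6) :
    xiFun c S (Pi.single a 1) = if a ∈ S then 1 else 0 := by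
  rw [xiFun, if_neg (single_ne_zero' a)]
  by_cases ha : a ∈ S
  · rw [if_pos ⟨a, ha, rfl⟩, if_pos ha]
  · rw [if_neg, if_neg ha]
    rintro ⟨b, hb, hab⟩
    exact ha (single_inj hab ▸ hb)

theorem xiFun_other (c : ℕ) (S : Finset (Fin 6)) {i : Fin 6 → ℕ} (h0 : i ≠ 0)
    (h1 : ∀ a : Fin 6, i ≠ Pi.single a 1) : xiFun c S i = 0 := by
  rw [xiFun, if_neg h0, if_neg]
  rintro ⟨a, -, ha⟩
  exact h1 a ha

noncomputable def xiP (c : ℕ) (hc : 1 ≤ c) (S : Finset (Fin 6)) : NPartition 6 where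
  toFun := xiFun c S
  antitone := by
    intro i j hij
    by_cases hj : j = 0
    · subst hj
      have : i = 0 := funext fun a => Nat.le_zero.mp (hij a)
      rw [this]
    · rw [xiFun, if_neg hj]
      by_cases hj1 : ∃ a ∈ S, j = Pi.single a 1
      · rw [if_pos hj1]
        obtain ⟨a, ha, rfl⟩ := hj1
        rcases le_single hij with rfl | rfl
        · rw [xiFun_zero]; exact hc
        · rw [xiFun_single, if_pos ha]
      · rw [if_neg hj1]; exact Nat.zero_le _
  finite := by
    apply Set.Finite.subset ((Set.finite_range (fun a : Fin 6 => Pi.single a (1:ℕ))).insert 0)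
    intro i hi
    simp only [Function.mem_support] at hi
    by_cases h0 : i = 0
    · exact Or.inl h0
    · right
      by_contra h1
      exact hi (xiFun_other c S h0 (fun a ha => h1 ⟨a, ha.symm⟩))

def front (j : Fin 7 → ℕ) : Fin 6 → ℕ := fun a => j (Fin.castSucc a)

theorem binFun7 (hn : 1 ≤ 7) (ξ : NPartition 6) (j : Fin 7 → ℕ) :
    binFun 7 hn ξ j = if j 6 < ξ.toFun (front j) then 1 else 0 := rfl

theorem front_zero : front 0 = 0 := rfl

theorem front_single_castSucc (a : Fin 6) :
    front (Pi.single (Fin.castSucc a) 1) = Pi.single a 1 := by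
  funext b
  simp [front, Pi.single_apply, Fin.castSucc_inj]

theorem castSucc_ne_six (b : Fin 6) : Fin.castSucc b ≠ (6 : Fin 7) := by
  intro h
  have := congrArg Fin.val h
  simp at this
  omega

theorem front_single_last : front (Pi.single (6 : Fin 7) 1) = 0 := by
  funext b
  simp [front, Pi.single_apply, castSucc_ne_six b]

theorem single_castSucc_six (a : Fin 6) : (Pi.single (Fin.castSucc a) 1 : Fin 7 → ℕ) 6 = 0 := by
  simp [Pi.single_apply, (castSucc_ne_six a).symm]

theorem eq_of_front {j k : Fin 7 → ℕ} (h1 : front j = front k) (h2 : j 6 = k 6) : j = k := by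
  funext b
  induction b using Fin.lastCases with
  | last => exact h2
  | cast a => exact congrFun h1 a

/-- The nonempty 6-partition ξ_{c,S} as an element of the subtype. -/
noncomputable def xiS (c : ℕ) (hc : 1 ≤ c) (S : Finset (Fin 6)) :
    {ξ : NPartition 6 // ξ.toFun ≠ 0} :=
  ⟨xiP c hc S, by
    intro h
    have := congrFun h 0
    rw [show (xiP c hc S).toFun = xiFun c S from rfl, xiFun_zero] at this
    simp at this; omega⟩

theorem xiS_toFun (c : ℕ) (hc : 1 ≤ c) (S : Finset (Fin 6)) :
    (xiS c hc S).1.toFun = xiFun c S := rfl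

theorem xiS_ne (S T : Finset (Fin 6)) : xiS 2 one_le_two S ≠ xiS 1 le_rfl T := by
  intro h
  have := congrFun (congrArg (fun x => x.1.toFun) h) 0
  simp only [xiS_toFun, xiFun_zero] at this
  omega

theorem xiS2_inj {S T : Finset (Fin 6)} (h : xiS 2 one_le_two S = xiS 2 one_le_two T) : S = T := by
  ext a
  have := congrFun (congrArg (fun x => x.1.toFun) h) (Pi.single a 1)
  simp only [xiS_toFun, xiFun_single] at this
  constructor <;> intro hm
  · by_contra hn
    rw [if_pos hm, if_neg hn] at this; exact one_ne_zero this
  · by_contra hn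
    rw [if_neg hn, if_pos hm] at this; exact one_ne_zero this.symm

/-- The candidate element of 𝒞_π indexed by S. -/
noncomputable def mS (S : Finset (Fin 6)) : {ξ : NPartition 6 // ξ.toFun ≠ 0} → ℕ :=
  fun ξ => (if ξ = xiS 2 one_le_two S then 1 else 0) + (if ξ = xiS 1 le_rfl Sᶜ then 1 else 0)

end helpers

section main
open Classical

theorem f17_zero : f17 0 = 2 := by simp [f17]

theorem f17_single (a : Fin 7) : f17 (Pi.single a 1) = 1 := by
  rw [f17, if_neg (single_ne_zero' a), if_pos ⟨a, rfl⟩]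

theorem f17_other {j : Fin 7 → ℕ} (h0 : j ≠ 0) (h1 : ∀ a : Fin 7, j ≠ Pi.single a 1) :
    f17 j = 0 := by
  rw [f17, if_neg h0, if_neg]
  rintro ⟨a, ha⟩
  exact h1 a ha

theorem bin_other (c : ℕ) (hc : c ≤ 2) (T : Finset (Fin 6)) {j : Fin 7 → ℕ}
    (h0 : j ≠ 0) (h1 : ∀ a : Fin 7, j ≠ Pi.single a 1) :
    ¬ (j 6 < xiFun c T (front j)) := by
  by_cases hf : front j = 0
  · have hj0 : j 6 ≠ 0 := by
      intro h
      exact h0 (eq_of_front (by rw [hf, front_zero]) h)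
    have hj1 : j 6 ≠ 1 := by
      intro h
      refine h1 6 (eq_of_front ?_ ?_)
      · rw [hf, front_single_last]
      · rw [h, Pi.single_eq_same]
    rw [hf, xiFun_zero]
    omega
  · by_cases hs : ∃ a : Fin 6, front j = Pi.single a 1
    · obtain ⟨a, ha⟩ := hs
      have hj0 : j 6 ≠ 0 := by
        intro h
        refine h1 (Fin.castSucc a) (eq_of_front ?_ ?_)
        · rw [ha, front_single_castSucc]
        · rw [h, single_castSucc_six]
      rw [ha, xiFun_single]
      split <;> omega
    · push_neg at hs
      rw [xiFun_other c T hf hs]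
      omega

theorem pointwise (S : Finset (Fin 6)) (hn : 1 ≤ 7) (j : Fin 7 → ℕ) :
    f17 j = binFun 7 hn (xiS 2 one_le_two S).1 j + binFun 7 hn (xiS 1 le_rfl Sᶜ).1 j := by
  rw [binFun7, binFun7, xiS_toFun, xiS_toFun]
  by_cases h0 : j = 0
  · subst h0
    rw [f17_zero, front_zero, xiFun_zero, xiFun_zero]
    norm_num
  by_cases h1 : ∃ a : Fin 7, j = Pi.single a 1
  · obtain ⟨a, rfl⟩ := h1
    rw [f17_single]
    induction a using Fin.lastCases with
    | last =>
      rw [show Fin.last 6 = (6 : Fin 7) from rfl, front_single_last, xiFun_zero, xiFun_zero,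
        Pi.single_eq_same]
      norm_num
    | cast a =>
      rw [front_single_castSucc, xiFun_single, xiFun_single, single_castSucc_six]
      by_cases ha : a ∈ S
      · rw [if_pos ha, if_neg (fun hh => (Finset.mem_compl.mp hh) ha)]
        norm_num
      · rw [if_neg ha, if_pos (Finset.mem_compl.mpr ha)]
        norm_num
  · push_neg at h1
    rw [f17_other h0 h1, if_neg (bin_other 2 le_rfl S h0 h1),
      if_neg (bin_other 1 one_le_two Sᶜ h0 h1)]

theorem mS_apply_two (S : Finset (Fin 6)) : mS S (xiS 2 one_le_two S) = 1 := by
  rw [mS, if_pos rfl, if_neg (xiS_ne S Sᶜ)]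

theorem mS_apply_one (S : Finset (Fin 6)) : mS S (xiS 1 le_rfl Sᶜ) = 1 := by
  rw [mS, if_neg (Ne.symm (xiS_ne S Sᶜ)), if_pos rfl]

theorem mS_apply_other (S : Finset (Fin 6)) {ξ} (h2 : ξ ≠ xiS 2 one_le_two S)
    (h1 : ξ ≠ xiS 1 le_rfl Sᶜ) : mS S ξ = 0 := by
  rw [mS, if_neg h2, if_neg h1]

theorem mS_mem (S : Finset (Fin 6)) (hn : 1 ≤ 7) (π : NPartition 7) (hπ : π.toFun = f17) :
    mS S ∈ Cset 7 hn π := by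
  constructor
  · apply Set.Finite.subset ((Set.finite_singleton (xiS 1 le_rfl Sᶜ)).insert
      (xiS 2 one_le_two S))
    intro ξ hξ
    simp only [Function.mem_support] at hξ
    by_contra h
    simp only [Set.mem_insert_iff, Set.mem_singleton_iff, not_or] at h
    exact hξ (mS_apply_other S h.1 h.2)
  · intro j
    have hsupp : Function.support (fun ξ => mS S ξ * binFun 7 hn ξ.1 j) ⊆
        ↑({xiS 2 one_le_two S, xiS 1 le_rfl Sᶜ} : Finset _) := by
      intro ξ hξ
      simp only [Function.mem_support] at hξ
      simp only [Finset.coe_insert, Finset.coe_singleton, Set.mem_insert_iff,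
        Set.mem_singleton_iff]
      by_contra h
      push_neg at h
      rw [mS_apply_other S h.1 h.2, zero_mul] at hξ
      exact hξ rfl
    rw [hπ, finsum_eq_finset_sum_of_support_subset _ hsupp,
      Finset.sum_pair (xiS_ne S Sᶜ), mS_apply_two, mS_apply_one, one_mul, one_mul]
    exact pointwise S hn j

end main

section backward
open Classical

theorem sum_one {α : Type*} {s : Finset α} {f : α → ℕ} (h : ∀ x ∈ s, f x ≠ 0)
    (hs : ∑ x ∈ s, f x = 1) : ∃ a, s = {a} ∧ f a = 1 := by
  have h1 : s.card ≤ 1 := by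
    calc s.card = ∑ _x ∈ s, 1 := Finset.card_eq_sum_ones s
    _ ≤ ∑ x ∈ s, f x := Finset.sum_le_sum (fun x hx => Nat.one_le_iff_ne_zero.mpr (h x hx))
    _ = 1 := hs
  have h2 : s.Nonempty := by
    by_contra h2
    rw [Finset.not_nonempty_iff_eq_empty] at h2
    rw [h2, Finset.sum_empty] at hs
    exact one_ne_zero hs.symm
  have h3 : s.card = 1 := le_antisymm h1 h2.card_pos
  obtain ⟨a, rfl⟩ := Finset.card_eq_one.mp h3
  exact ⟨a, rfl, by simpa using hs⟩

theorem toFun_zero_pos (ξ : {ξ : NPartition 6 // ξ.toFun ≠ 0}) : 0 < ξ.1.toFun 0 := by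
  obtain ⟨i, hi⟩ := Function.ne_iff.mp ξ.2
  simp only [Pi.zero_apply] at hi
  calc 0 < ξ.1.toFun i := Nat.pos_of_ne_zero hi
  _ ≤ ξ.1.toFun 0 := ξ.1.antitone (fun a => Nat.zero_le (i a))

def ext0 (i : Fin 6 → ℕ) : Fin 7 → ℕ := fun b => Fin.lastCases 0 i b

theorem front_ext0 (i : Fin 6 → ℕ) : front (ext0 i) = i := by
  funext a
  simp [front, ext0]

theorem ext0_six (i : Fin 6 → ℕ) : ext0 i 6 = 0 := by
  rw [show (6 : Fin 7) = Fin.last 6 from rfl]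
  exact Fin.lastCases_last (motive := fun _ => ℕ)

theorem front_single_six (v : ℕ) : front (Pi.single (6 : Fin 7) v) = 0 := by
  funext b
  simp [front, Pi.single_apply, castSucc_ne_six b]

theorem mem_Cset (hn : 1 ≤ 7) (π : NPartition 7) (hπ : π.toFun = f17)
    (m : {ξ : NPartition 6 // ξ.toFun ≠ 0} → ℕ) (hm : m ∈ Cset 7 hn π) :
    ∃ S : Finset (Fin 6), m = mS S := by
  obtain ⟨hfin, hsum⟩ := hm
  set s := hfin.toFinset with hs_def
  have hmem : ∀ ξ ∈ s, m ξ ≠ 0 := fun ξ hξ => (hfin.mem_toFinset.mp hξ)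
  have hs : ∀ j, f17 j = ∑ ξ ∈ s, m ξ * binFun 7 hn ξ.1 j := by
    intro j
    rw [← hπ, hsum j]
    apply finsum_eq_finset_sum_of_support_subset
    intro ξ hξ
    rw [hfin.coe_toFinset]
    simp only [Function.mem_support] at hξ ⊢
    intro h0
    rw [h0, zero_mul] at hξ
    exact hξ rfl
  -- points where f17 vanishes force binFun to vanish
  have hzero : ∀ j, f17 j = 0 → ∀ ξ ∈ s, ¬ (j 6 < ξ.1.toFun (front j)) := by
    intro j hj ξ hξ hlt
    have h := hs j
    rw [hj] at h
    have h0 := Finset.sum_eq_zero_iff.mp h.symm ξ hξ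
    rw [binFun7, if_pos hlt, mul_one] at h0
    exact hmem ξ hξ h0
  -- total multiplicity is 2
  have hA : ∑ ξ ∈ s, m ξ = 2 := by
    have h := hs 0
    rw [f17_zero] at h
    calc ∑ ξ ∈ s, m ξ = ∑ ξ ∈ s, m ξ * binFun 7 hn ξ.1 0 :=
        Finset.sum_congr rfl (fun ξ _ => by
          rw [binFun7, if_pos (show (0 : Fin 7 → ℕ) 6 < ξ.1.toFun (front 0) from toFun_zero_pos ξ),
            mul_one])
    _ = 2 := h.symm
  -- every partition in the support has value ≤ 2 at the origin
  have hc2 : ∀ ξ ∈ s, ξ.1.toFun 0 ≤ 2 := by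
    intro ξ hξ
    have hf : f17 (Pi.single (6 : Fin 7) 2) = 0 := by
      apply f17_other
      · intro h
        have := congrFun h 6
        rw [Pi.single_eq_same] at this
        simp at this
      · intro a h
        have := congrFun h 6
        rw [Pi.single_eq_same, Pi.single_apply] at this
        split at this <;> omega
    have h := hzero _ hf ξ hξ
    rw [front_single_six, Pi.single_eq_same] at h
    omega
  -- value ≤ 1 at standard basis points
  have hle1 : ∀ (a : Fin 6), ∀ ξ ∈ s, ξ.1.toFun (Pi.single a 1) ≤ 1 := by
    intro a ξ hξ
    set j : Fin 7 → ℕ := Pi.single (Fin.castSucc a) 1 + Pi.single (6 : Fin 7) 1 with hj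
    have hj6 : j 6 = 1 := by
      rw [hj, Pi.add_apply, single_castSucc_six, Pi.single_eq_same]
    have hjf : front j = Pi.single a 1 := by
      funext b
      rw [hj, front, Pi.add_apply]
      have h1 : (Pi.single (Fin.castSucc a) 1 : Fin 7 → ℕ) (Fin.castSucc b) = (Pi.single a 1 : Fin 6 → ℕ) b := by
        simp [Pi.single_apply, Fin.castSucc_inj]
      have h2 : (Pi.single (6 : Fin 7) 1 : Fin 7 → ℕ) (Fin.castSucc b) = 0 := by
        simp [Pi.single_apply, castSucc_ne_six b]
      rw [h1, h2, add_zero]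
    have hf : f17 j = 0 := by
      apply f17_other
      · intro h
        have := congrFun h 6
        rw [hj6] at this
        simp at this
      · intro b h
        induction b using Fin.lastCases with
        | last =>
          have := congrFun h (Fin.castSucc a)
          rw [hj, Pi.add_apply, Pi.single_eq_same] at this
          have h2 : (Pi.single (6 : Fin 7) 1 : Fin 7 → ℕ) (Fin.castSucc a) = 0 := by
            simp [Pi.single_apply, castSucc_ne_six a]
          have h3 : (Pi.single (Fin.last 6) 1 : Fin 7 → ℕ) (Fin.castSucc a) = 0 := by
            simp [Pi.single_apply, (show (Fin.castSucc a : Fin 7) ≠ Fin.last 6 from castSucc_ne_six a), castSucc_ne_six a]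
          rw [h2, h3] at this
          simp at this
        | cast b =>
          have := congrFun h 6
          rw [hj6, single_castSucc_six] at this
          exact one_ne_zero this
    have h := hzero _ hf ξ hξ
    rw [hjf, hj6] at h
    omega
  -- value 0 elsewhere
  have hz : ∀ (i : Fin 6 → ℕ), i ≠ 0 → (∀ a : Fin 6, i ≠ Pi.single a 1) →
      ∀ ξ ∈ s, ξ.1.toFun i = 0 := by
    intro i hi0 hi1 ξ hξ
    have hf : f17 (ext0 i) = 0 := by
      apply f17_other
      · intro h
        apply hi0
        rw [← front_ext0 i, h, front_zero]
      · intro b h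
        induction b using Fin.lastCases with
        | last =>
          apply hi0
          rw [← front_ext0 i, h, show Fin.last 6 = (6 : Fin 7) from rfl, front_single_last]
        | cast b =>
          apply hi1 b
          rw [← front_ext0 i, h, front_single_castSucc]
    have h := hzero _ hf ξ hξ
    rw [front_ext0, ext0_six] at h
    omega
  -- structure of each ξ in the support
  set T : {ξ : NPartition 6 // ξ.toFun ≠ 0} → Finset (Fin 6) :=
    fun ξ => Finset.univ.filter (fun a => ξ.1.toFun (Pi.single a 1) = 1) with hT_def
  have hform : ∀ ξ ∈ s, ξ.1.toFun = xiFun (ξ.1.toFun 0) (T ξ) := by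
    intro ξ hξ
    funext i
    by_cases h0 : i = 0
    · subst h0; rw [xiFun_zero]
    by_cases h1 : ∃ a : Fin 6, i = Pi.single a 1
    · obtain ⟨a, rfl⟩ := h1
      rw [xiFun_single]
      have hv := hle1 a ξ hξ
      by_cases hva : ξ.1.toFun (Pi.single a 1) = 1
      · rw [if_pos (by simp [hT_def, hva]), hva]
      · rw [if_neg (by simp [hT_def, hva])]
        omega
    · push_neg at h1
      rw [xiFun_other _ _ h0 h1]
      exact hz i h0 h1 ξ hξ
  -- the constraint at the point e₇
  have hB : ∑ ξ ∈ s.filter (fun ξ => 1 < ξ.1.toFun 0), m ξ = 1 := by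
    have h := hs (Pi.single (6 : Fin 7) 1)
    rw [f17_single] at h
    rw [Finset.sum_filter]
    have he : ∀ ξ ∈ s, (if 1 < ξ.1.toFun 0 then m ξ else 0)
        = m ξ * binFun 7 hn ξ.1 (Pi.single (6 : Fin 7) 1) := by
      intro ξ hξ
      rw [binFun7, front_single_last, Pi.single_eq_same]
      split_ifs <;> omega
    rw [Finset.sum_congr rfl he]
    exact h.symm
  obtain ⟨ξ₂, hs2, hm2⟩ := sum_one
    (fun x hx => hmem x (Finset.mem_filter.mp hx).1) hB
  have hB1 : ∑ ξ ∈ s.filter (fun ξ => ¬ 1 < ξ.1.toFun 0), m ξ = 1 := by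
    have := Finset.sum_filter_add_sum_filter_not s (fun ξ => 1 < ξ.1.toFun 0) m
    omega
  obtain ⟨ξ₁, hs1, hm1⟩ := sum_one
    (fun x hx => hmem x (Finset.mem_filter.mp hx).1) hB1
  have hξ₂mem' : ξ₂ ∈ s.filter (fun ξ => 1 < ξ.1.toFun 0) := by
    rw [hs2]; exact Finset.mem_singleton_self ξ₂
  have hξ₁mem' : ξ₁ ∈ s.filter (fun ξ => ¬ 1 < ξ.1.toFun 0) := by
    rw [hs1]; exact Finset.mem_singleton_self ξ₁
  have hξ₂mem : ξ₂ ∈ s := (Finset.mem_filter.mp hξ₂mem').1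
  have hξ₁mem : ξ₁ ∈ s := (Finset.mem_filter.mp hξ₁mem').1
  have hc₂ : ξ₂.1.toFun 0 = 2 := by
    have := (Finset.mem_filter.mp hξ₂mem').2
    have := hc2 ξ₂ hξ₂mem
    omega
  have hc₁ : ξ₁.1.toFun 0 = 1 := by
    have := (Finset.mem_filter.mp hξ₁mem').2
    have := toFun_zero_pos ξ₁
    omega
  have hne : ξ₂ ≠ ξ₁ := by
    intro h; rw [h, hc₁] at hc₂; omega
  have hS : s = {ξ₂, ξ₁} := by
    ext x
    constructor
    · intro hx
      by_cases hp : 1 < x.1.toFun 0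
      · have : x ∈ s.filter (fun ξ => 1 < ξ.1.toFun 0) := Finset.mem_filter.mpr ⟨hx, hp⟩
        rw [hs2, Finset.mem_singleton] at this
        simp [this]
      · have : x ∈ s.filter (fun ξ => ¬ 1 < ξ.1.toFun 0) := Finset.mem_filter.mpr ⟨hx, hp⟩
        rw [hs1, Finset.mem_singleton] at this
        simp [this]
    · intro hx
      rcases Finset.mem_insert.mp hx with rfl | hx
      · exact hξ₂mem
      · rw [Finset.mem_singleton] at hx
        subst hx
        exact hξ₁mem
  -- complementary index sets
  have hcompl : T ξ₁ = (T ξ₂)ᶜ := by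
    ext a
    have h := hs (Pi.single (Fin.castSucc a) 1)
    rw [f17_single, hS, Finset.sum_pair hne, hm2, hm1, one_mul, one_mul,
      binFun7, binFun7, front_single_castSucc, single_castSucc_six] at h
    have hv2 := hle1 a ξ₂ hξ₂mem
    have hv1 := hle1 a ξ₁ hξ₁mem
    simp only [hT_def, Finset.mem_compl, Finset.mem_filter, Finset.mem_univ, true_and]
    split_ifs at h <;> omega
  -- assemble
  refine ⟨T ξ₂, ?_⟩
  have hx2 : ξ₂ = xiS 2 one_le_two (T ξ₂) := by
    apply Subtype.ext
    apply NPartition.ext'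
    have h := hform ξ₂ hξ₂mem
    rw [hc₂] at h
    rw [show (xiS 2 one_le_two (T ξ₂)).1.toFun = xiFun 2 (T ξ₂) from rfl]
    exact h
  have hx1 : ξ₁ = xiS 1 le_rfl (T ξ₂)ᶜ := by
    apply Subtype.ext
    apply NPartition.ext'
    have h := hform ξ₁ hξ₁mem
    rw [hc₁, hcompl] at h
    rw [show (xiS 1 le_rfl (T ξ₂)ᶜ).1.toFun = xiFun 1 (T ξ₂)ᶜ from rfl]
    exact h
  funext ξ
  by_cases h2 : ξ = ξ₂
  · subst h2
    have hv := mS_apply_two (T ξ)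
    rw [← hx2] at hv
    rw [hm2, hv]
  by_cases h1 : ξ = ξ₁
  · subst h1
    have hv := mS_apply_one (T ξ₂)
    rw [← hx1] at hv
    rw [hm1, hv]
  · have hns : ξ ∉ s := by
      rw [hS]
      intro hx
      rcases Finset.mem_insert.mp hx with rfl | hx
      · exact h2 rfl
      · rw [Finset.mem_singleton] at hx
        exact h1 hx
    have hm0 : m ξ = 0 := by
      by_contra hc
      exact hns (hfin.mem_toFinset.mpr hc)
    rw [hm0, mS_apply_other _ (fun h => h2 (h.trans hx2.symm))
      (fun h => h1 (h.trans hx1.symm))]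

section final
open Classical

theorem mS_injective : Function.Injective mS := by
  intro S S' h
  have h1 := congrFun h (xiS 2 one_le_two S)
  rw [mS_apply_two] at h1
  rw [mS, if_neg (xiS_ne S S'ᶜ)] at h1
  by_cases h2 : xiS 2 one_le_two S = xiS 2 one_le_two S'
  · exact xiS2_inj h2
  · rw [if_neg h2] at h1
    simp at h1

theorem Cset_eq (hn : 1 ≤ 7) (π : NPartition 7) (hπ : π.toFun = f17) :
    Cset 7 hn π = ↑(Finset.image mS Finset.univ) := by
  ext m
  simp only [Finset.coe_image, Finset.coe_univ, Set.image_univ, Set.mem_range]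
  constructor
  · intro hm
    obtain ⟨S, hS⟩ := mem_Cset hn π hπ m hm
    exact ⟨S, hS.symm⟩
  · rintro ⟨S, rfl⟩
    exact mS_mem S hn π hπ

theorem prod_mS (S : Finset (Fin 6)) : ∏ᶠ ξ, (1 / (Nat.factorial (mS S ξ)) : ℚ) = 1 := by
  have hval : ∀ ξ, (1 / (Nat.factorial (mS S ξ)) : ℚ) = 1 := by
    intro ξ
    have h01 : mS S ξ = 0 ∨ mS S ξ = 1 := by
      rw [mS]
      split_ifs with h1 h2 h3
      · exact absurd (h1.symm.trans h2) (xiS_ne S Sᶜ)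
      · omega
      · omega
      · omega
    rcases h01 with h | h <;> rw [h] <;> norm_num
  rw [finprod_congr hval]
  exact finprod_one

theorem omegaC_value (hn : 1 ≤ 7) (π : NPartition 7) (hπ : π.toFun = f17) :
    omegaC 7 hn π = 64 := by
  rw [omegaC, Cset_eq hn π hπ, finsum_mem_coe_finset]
  have hone : ∀ m ∈ Finset.image mS Finset.univ,
      (∏ᶠ ξ, (1 / (Nat.factorial (m ξ)) : ℚ)) = 1 := by
    intro m hm
    obtain ⟨S, -, rfl⟩ := Finset.mem_image.mp hm
    exact prod_mS S
  rw [Finset.sum_congr rfl hone, Finset.sum_const,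
    Finset.card_image_of_injective _ mS_injective]
  simp [Finset.card_univ, Fintype.card_finset]

end final


theorem stmt_17 (π : NPartition 7) (hπ : π.toFun = f17) :
    omegaC 7 (by norm_num) π = 64 ∧
      (64 : ℚ) = 1 + 7 + (Nat.choose 7 2 : ℚ) + (Nat.choose 7 3 : ℚ) := by
  constructor
  · exact omegaC_value (by norm_num) π hπ
  · rw [show Nat.choose 7 2 = 21 from rfl, show Nat.choose 7 3 = 35 from rfl]
    norm_num
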